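/- arXiv:2110.01070 — 4 statements merged into one kernel-verified Lean document; each statement's English description precedes it below -/
import Mathlib

section
/- If every source-to-sink path p satisfies A_{:l_p} = Σ_{ij∈E^f} h^f_{ij} a_{ijp}, then any nonnegative flow ψ = Σ_p α_p a_p contributes Σ_{ij} h^f_{ij} ψ_{ij} = Σ_p α_p A_{:l_p} to the master problem constraints; hence any feasible solution (θ, ψ) of the Graph Generation RMP corresponds to a feasible solution of the master problem over the union of families with the same objective value. -/
/-- `p` is a directed path from `s` to `t` along edges in `E`. -/
def IsPath {V : Type*} (E : Finset (V × V)) (s t : V) (p : List V) : Prop :=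
  p ≠ [] ∧ p.head? = some s ∧ p.getLast? = some t ∧ p.Chain' (fun a b => (a, b) ∈ E)

/-- Number of times the path `p` uses edge `e` (the path indicator). -/
def edgeCount {V : Type*} [DecidableEq V] (p : List V) (e : V × V) : ℕ :=
  (p.zip p.tail).count e

/-- If `A_{:l_p} = Σ_{ij} h^f_{ij} a_{ijp}` for every source-to-sink path `p`, then any
nonnegative flow `ψ^f = Σ_p α_p a_p` contributes `Σ_{ij} h^f_{ij} ψ^f_{ij} = Σ_p α_p A_{:l_p}`
to the master problem constraints; hence any feasible solution `(θ, ψ)` of the Graph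
Generation RMP corresponds to a feasible master problem solution supported on the union
of the families `Ω_{R2}` with the same objective value. -/
theorem gg_rmp_solution_is_mp_solution
    {V : Type*} [Fintype V] [DecidableEq V]
    {L : Type*} [Fintype L] [DecidableEq L]   -- the set of columns Ω
    {ι : Type*} [Fintype ι]                   -- the set of generated families F_R
    {m : ℕ}
    (A : L → Fin m → ℝ) (c : L → ℝ) (b : Fin m → ℝ)
    (E : ι → Finset (V × V)) (vplus vminus : V)
    (pathCol : ι → List V → L)                -- the surjection p ↦ l_p onto Ω_f
    (h : ι → V × V → Fin m → ℝ)               -- the vectors h^f_{ij}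
    (ce : ι → V × V → ℝ)                      -- the edge costs c^f_{ij}
    (P : ι → Finset (List V)) (α : ι → List V → ℝ)
    (hpath : ∀ f, ∀ p ∈ P f, IsPath (E f) vplus vminus p)
    (hA : ∀ f, ∀ p ∈ P f, ∀ i : Fin m,
      A (pathCol f p) i = ∑ e : V × V, h f e i * (edgeCount p e : ℝ))
    (hc : ∀ f, ∀ p ∈ P f,
      c (pathCol f p) = ∑ e : V × V, ce f e * (edgeCount p e : ℝ))
    (hα : ∀ f p, 0 ≤ α f p)
    (ψ : ι → V × V → ℝ)
    (hdecomp : ∀ f, ∀ e : V × V, ψ f e = ∑ p ∈ P f, α f p * (edgeCount p e : ℝ))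
    (ΩR : Finset L) (θ : L → ℝ)
    (hθ : ∀ l, 0 ≤ θ l) (hθsupp : ∀ l ∉ ΩR, θ l = 0)
    (hfeas : ∀ i : Fin m,
      b i ≤ ∑ l ∈ ΩR, A l i * θ l + ∑ f : ι, ∑ e : V × V, h f e i * ψ f e) :
    (∀ f : ι, ∀ i : Fin m,
      ∑ e : V × V, h f e i * ψ f e = ∑ p ∈ P f, α f p * A (pathCol f p) i) ∧
    ∃ θ' : L → ℝ,
      (∀ l, 0 ≤ θ' l) ∧
      (∀ l, θ' l ≠ 0 → l ∈ ΩR ∨ ∃ f : ι, ∃ p ∈ P f, pathCol f p = l) ∧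
      (∀ i : Fin m, b i ≤ ∑ l : L, A l i * θ' l) ∧
      (∑ l : L, c l * θ' l =
        ∑ l ∈ ΩR, c l * θ l + ∑ f : ι, ∑ e : V × V, ce f e * ψ f e) := by
  classical
  have gen : ∀ f : ι, ∀ (k : V × V → ℝ) (v : List V → ℝ),
      (∀ p ∈ P f, v p = ∑ e : V × V, k e * (edgeCount p e : ℝ)) →
      ∑ e : V × V, k e * ψ f e = ∑ p ∈ P f, α f p * v p := by
    intro f k v hv
    calc ∑ e : V × V, k e * ψ f e
        = ∑ e : V × V, ∑ p ∈ P f, α f p * (k e * (edgeCount p e : ℝ)) := by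
          refine Finset.sum_congr rfl fun e _ => ?_
          rw [hdecomp f e, Finset.mul_sum]
          exact Finset.sum_congr rfl fun p _ => by ring
      _ = ∑ p ∈ P f, α f p * ∑ e : V × V, k e * (edgeCount p e : ℝ) := by
          rw [Finset.sum_comm]
          exact Finset.sum_congr rfl fun p _ => (Finset.mul_sum _ _ _).symm
      _ = ∑ p ∈ P f, α f p * v p :=
          Finset.sum_congr rfl fun p hp => by rw [hv p hp]
  have key : ∀ f : ι, ∀ i : Fin m,
      ∑ e : V × V, h f e i * ψ f e = ∑ p ∈ P f, α f p * A (pathCol f p) i :=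
    fun f i => gen f (fun e => h f e i) (fun p => A (pathCol f p) i)
      (fun p hp => hA f p hp i)
  have keyc : ∀ f : ι,
      ∑ e : V × V, ce f e * ψ f e = ∑ p ∈ P f, α f p * c (pathCol f p) :=
    fun f => gen f (ce f) (fun p => c (pathCol f p)) (fun p hp => hc f p hp)
  refine ⟨key, ?_⟩
  set θ' : L → ℝ := fun l => (if l ∈ ΩR then θ l else 0) +
      ∑ f : ι, ∑ p ∈ (P f).filter (fun p => pathCol f p = l), α f p with hθ'def
  have hfiber : ∀ g : L → ℝ, ∑ l : L, g l * θ' l =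
      ∑ l ∈ ΩR, g l * θ l + ∑ f : ι, ∑ p ∈ P f, α f p * g (pathCol f p) := by
    intro g
    have h1 : ∑ l : L, g l * (if l ∈ ΩR then θ l else 0) = ∑ l ∈ ΩR, g l * θ l := by
      simp [mul_ite, Finset.sum_ite_mem]
    have h2 : ∑ l : L, g l *
        (∑ f : ι, ∑ p ∈ (P f).filter (fun p => pathCol f p = l), α f p) =
        ∑ f : ι, ∑ p ∈ P f, α f p * g (pathCol f p) := by
      calc ∑ l : L, g l * ∑ f : ι, ∑ p ∈ (P f).filter (fun p => pathCol f p = l), α f p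
          = ∑ l : L, ∑ f : ι, ∑ p ∈ (P f).filter (fun p => pathCol f p = l),
              α f p * g (pathCol f p) := by
            refine Finset.sum_congr rfl fun l _ => ?_
            rw [Finset.mul_sum]
            refine Finset.sum_congr rfl fun f _ => ?_
            rw [Finset.mul_sum]
            refine Finset.sum_congr rfl fun p hp => ?_
            rw [(Finset.mem_filter.mp hp).2]; ring
        _ = ∑ f : ι, ∑ l : L, ∑ p ∈ (P f).filter (fun p => pathCol f p = l),
              α f p * g (pathCol f p) := Finset.sum_comm
        _ = ∑ f : ι, ∑ p ∈ P f, α f p * g (pathCol f p) := by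
            refine Finset.sum_congr rfl fun f _ => ?_
            exact Finset.sum_fiberwise (P f) (fun p => pathCol f p)
              (fun p => α f p * g (pathCol f p))
    calc ∑ l : L, g l * θ' l
        = ∑ l : L, (g l * (if l ∈ ΩR then θ l else 0) + g l *
            ∑ f : ι, ∑ p ∈ (P f).filter (fun p => pathCol f p = l), α f p) := by
          refine Finset.sum_congr rfl fun l _ => ?_
          rw [hθ'def]; ring
      _ = _ := by rw [Finset.sum_add_distrib, h1, h2]
  refine ⟨θ', ?_, ?_, ?_, ?_⟩
  · intro l
    refine add_nonneg (by split_ifs with hh; exacts [hθ l, le_rfl]) ?_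
    exact Finset.sum_nonneg fun f _ => Finset.sum_nonneg fun p _ => hα f p
  · intro l hl
    by_contra hcon
    push_neg at hcon
    obtain ⟨hl1, hl2⟩ := hcon
    apply hl
    rw [hθ'def]
    simp only [hl1, if_false, zero_add]
    refine Finset.sum_eq_zero fun f _ => Finset.sum_eq_zero fun p hp => ?_
    exact absurd (Finset.mem_filter.mp hp).2 (hl2 f p (Finset.mem_filter.mp hp).1)
  · intro i
    rw [hfiber (fun l => A l i)]
    refine le_trans (hfeas i) ?_
    refine add_le_add le_rfl (le_of_eq ?_)
    exact Finset.sum_congr rfl fun f _ => key f i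
  · rw [hfiber c]
    refine congrArg (_ + ·) ?_
    exact Finset.sum_congr rfl fun f _ => (keyc f).symm
end

section
/- The optimal value Ψ(Ω_{R2}) of the Graph Generation restricted master problem equals the optimal value of the master problem restricted to the union Ω_{R2} = ∪_{l∈Ω_R} Ω_{f_l} of the families of the generated columns; in particular Ψ(Ω_{R2}) ≤ Ψ(Ω_R). -/
lemma chain'_mem_zip {V : Type*} {R : V → V → Prop} :
    ∀ {l : List V}, l.Chain' R → ∀ {a b : V}, (a, b) ∈ l.zip l.tail → R a b := by
  intro l
  induction l with
  | nil => intro _ a b hm; simp at hm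
  | cons x xs ih =>
    intro hch a b hm
    cases xs with
    | nil => simp at hm
    | cons y ys =>
      simp only [List.Chain', List.isChain_cons_cons] at hch
      simp only [List.tail_cons, List.zip_cons_cons, List.mem_cons] at hm
      rcases hm with hm | hm
      · cases hm; exact hch.1
      · exact ih hch.2 hm

lemma sum_count_snd {V : Type*} [Fintype V] [DecidableEq V] (i : V) :
    ∀ (p : List V), ∑ j : V, edgeCount p (j, i) = p.tail.count i := by
  intro p
  induction p with
  | nil => simp [edgeCount]
  | cons a p ih =>
    cases p with
    | nil => simp [edgeCount]
    | cons b t =>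
      simp only [edgeCount, List.tail_cons, List.zip_cons_cons, List.count_cons] at *
      rw [Finset.sum_add_distrib, ih]
      congr 1
      simp only [beq_iff_eq, Prod.mk.injEq]
      by_cases hb : b = i
      · simp [hb, eq_comm]
      · simp [hb]

lemma sum_count_fst {V : Type*} [Fintype V] [DecidableEq V] (i : V) :
    ∀ (p : List V), ∑ j : V, edgeCount p (i, j) = p.dropLast.count i := by
  intro p
  induction p with
  | nil => simp [edgeCount]
  | cons a p ih =>
    cases p with
    | nil => simp [edgeCount]
    | cons b t =>
      simp only [edgeCount, List.tail_cons, List.zip_cons_cons, List.count_cons,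
        List.dropLast_cons₂] at *
      rw [Finset.sum_add_distrib, ih]
      congr 1
      simp only [beq_iff_eq, Prod.mk.injEq]
      by_cases ha : a = i
      · simp [ha, eq_comm]
      · simp [ha]

lemma path_edge_mem {V : Type*} [DecidableEq V] {E : Finset (V × V)} {s t : V} {p : List V}
    (hp : IsPath E s t p) {e : V × V} (he : 0 < edgeCount p e) : e ∈ E := by
  rw [edgeCount, List.count_pos_iff] at he
  exact chain'_mem_zip hp.2.2.2 (a := e.1) (b := e.2) (by simpa using he)

lemma path_conservation {V : Type*} [Fintype V] [DecidableEq V] {E : Finset (V × V)}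
    {s t : V} {p : List V} (hp : IsPath E s t p) {i : V} (hs : i ≠ s) (ht : i ≠ t) :
    ∑ j : V, edgeCount p (j, i) = ∑ j : V, edgeCount p (i, j) := by
  rw [sum_count_snd, sum_count_fst]
  obtain ⟨hne, hhead, hlast, _⟩ := hp
  have h1 : p.tail.count i = p.count i := by
    cases p with
    | nil => simp at hne
    | cons a q =>
      simp only [List.head?_cons, Option.some.injEq] at hhead
      subst hhead
      simp [List.count_cons, Ne.symm hs]
  have h2 : p.dropLast.count i = p.count i := by
    have hdl : p.dropLast ++ [p.getLast hne] = p := List.dropLast_append_getLast hne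
    have hl : p.getLast hne = t := by
      rw [List.getLast?_eq_getLast hne] at hlast
      exact Option.some.injEq .. ▸ hlast
    conv_rhs => rw [← hdl]
    simp [List.count_append, hl, List.count_singleton, Ne.symm ht, ht]
  rw [h1, h2]

lemma exists_pos_path {V : Type*} [Fintype V] [DecidableEq V]
    (Ef : Finset (V × V)) (vplus vminus : V)
    (hacyc : ∀ v : V, ¬ Relation.TransGen (fun a b => (a, b) ∈ Ef) v v)
    (hsource : ∀ u : V, (u, vplus) ∉ Ef) (hsink : ∀ u : V, (vminus, u) ∉ Ef)
    (ψ : V × V → ℝ) (hpos : ∀ e, 0 ≤ ψ e) (hsupp : ∀ e ∉ Ef, ψ e = 0)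
    (hcons : ∀ i : V, i ≠ vplus → i ≠ vminus → ∑ j : V, ψ (j, i) = ∑ j : V, ψ (i, j))
    {u v : V} (h0 : 0 < ψ (u, v)) :
    ∃ p, IsPath Ef vplus vminus p ∧ (∀ e, 0 < edgeCount p e → 0 < ψ e) ∧ 2 ≤ p.length := by
  have hE : ∀ {a b : V}, 0 < ψ (a, b) → (a, b) ∈ Ef := by
    intro a b hab
    by_contra hn
    rw [hsupp _ hn] at hab
    exact lt_irrefl _ hab
  -- forward well-foundedness
  have hirr : IsIrrefl V (Relation.TransGen fun w x => (x, w) ∈ Ef) :=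
    ⟨fun x hx => hacyc x (Relation.transGen_swap.mp hx)⟩
  have hwfF : WellFounded (fun w x : V => (x, w) ∈ Ef) :=
    Subrelation.wf (r := Relation.TransGen fun w x => (x, w) ∈ Ef)
      (fun h => Relation.TransGen.single h)
      (Finite.wellFounded_of_trans_of_irrefl _)
  have hirr' : IsIrrefl V (Relation.TransGen fun t x => (t, x) ∈ Ef) :=
    ⟨fun x hx => hacyc x hx⟩
  have hwfB : WellFounded (fun t x : V => (t, x) ∈ Ef) :=
    Subrelation.wf (r := Relation.TransGen fun t x => (t, x) ∈ Ef)
      (fun h => Relation.TransGen.single h)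
      (Finite.wellFounded_of_trans_of_irrefl _)
  have F : ∀ x : V, (∃ w, 0 < ψ (w, x)) → ∃ q : List V, q ≠ [] ∧ q.head? = some x ∧
      q.getLast? = some vminus ∧ q.Chain' (fun a b => 0 < ψ (a, b)) := by
    intro x
    induction x using hwfF.induction with
    | _ x ih =>
      intro hex
      obtain ⟨w, hw⟩ := hex
      by_cases hxm : x = vminus
      · exact ⟨[x], by simp, by simp [hxm], by simp [hxm], by simp [List.Chain']⟩
      · have hxp : x ≠ vplus := fun hh => hsource w (hh ▸ hE hw)
        have hlt : 0 < ∑ j : V, ψ (x, j) := by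
          rw [← hcons x hxp hxm]
          exact lt_of_lt_of_le hw
            (Finset.single_le_sum (f := fun j => ψ (j, x)) (fun j _ => hpos _)
              (Finset.mem_univ w))
        have hy : ∃ y, 0 < ψ (x, y) := by
          by_contra hn
          push_neg at hn
          exact absurd (Finset.sum_nonpos fun j _ => hn j) (not_le.mpr hlt)
        obtain ⟨y, hy⟩ := hy
        obtain ⟨q', h1, h2, h3, h4⟩ := ih y (hE hy) ⟨x, hy⟩
        refine ⟨x :: q', by simp, by simp, ?_, ?_⟩
        · cases q' with
          | nil => exact absurd rfl h1
          | cons b t => rw [List.getLast?_cons_cons]; exact h3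
        · simp only [List.Chain']; rw [List.isChain_cons]
          refine ⟨fun b hb => ?_, h4⟩
          rw [h2, Option.mem_some_iff] at hb
          subst hb
          exact hy
  have B : ∀ x : V, (∃ w, 0 < ψ (x, w)) → ∃ q : List V, q ≠ [] ∧ q.head? = some vplus ∧
      q.getLast? = some x ∧ q.Chain' (fun a b => 0 < ψ (a, b)) := by
    intro x
    induction x using hwfB.induction with
    | _ x ih =>
      intro hex
      obtain ⟨w, hw⟩ := hex
      by_cases hxp : x = vplus
      · exact ⟨[x], by simp, by simp [hxp], by simp, by simp [List.Chain']⟩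
      · have hxm : x ≠ vminus := fun hh => hsink w (hh ▸ hE hw)
        have hlt : 0 < ∑ j : V, ψ (j, x) := by
          rw [hcons x hxp hxm]
          exact lt_of_lt_of_le hw
            (Finset.single_le_sum (f := fun j => ψ (x, j)) (fun j _ => hpos _)
              (Finset.mem_univ w))
        have ht : ∃ t, 0 < ψ (t, x) := by
          by_contra hn
          push_neg at hn
          exact absurd (Finset.sum_nonpos fun j _ => hn j) (not_le.mpr hlt)
        obtain ⟨t, ht⟩ := ht
        obtain ⟨q', h1, h2, h3, h4⟩ := ih t (hE ht) ⟨x, ht⟩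
        refine ⟨q' ++ [x], by simp, ?_, by simp [List.getLast?_concat], ?_⟩
        · rw [List.head?_append, h2]; rfl
        · simp only [List.Chain']; rw [List.isChain_append]
          refine ⟨h4, by simp, fun a ha b hb => ?_⟩
          rw [h3, Option.mem_some_iff] at ha
          simp only [List.head?_cons, Option.mem_some_iff] at hb
          subst ha; subst hb
          exact ht
  obtain ⟨q1, hq1ne, hq1h, hq1l, hq1c⟩ := B u ⟨v, h0⟩
  obtain ⟨q2, hq2ne, hq2h, hq2l, hq2c⟩ := F v ⟨u, h0⟩
  refine ⟨q1 ++ q2, ⟨by simp [hq1ne], ?_, ?_, ?_⟩, ?_, ?_⟩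
  · rw [List.head?_append, hq1h]; rfl
  · rw [List.getLast?_append, hq2l]; rfl
  · simp only [List.Chain']; rw [List.isChain_append]
    refine ⟨List.IsChain.imp (fun a b hab => hE hab) hq1c, List.IsChain.imp (fun a b hab => hE hab) hq2c,
      fun a ha b hb => ?_⟩
    rw [hq1l, Option.mem_some_iff] at ha
    rw [hq2h, Option.mem_some_iff] at hb
    subst ha; subst hb
    exact hE h0
  · intro e he
    rw [edgeCount, List.count_pos_iff] at he
    have hch : (q1 ++ q2).Chain' (fun a b => 0 < ψ (a, b)) := by
      simp only [List.Chain']; rw [List.isChain_append]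
      refine ⟨hq1c, hq2c, fun a ha b hb => ?_⟩
      rw [hq1l, Option.mem_some_iff] at ha
      rw [hq2h, Option.mem_some_iff] at hb
      subst ha; subst hb
      exact h0
    exact chain'_mem_zip hch (a := e.1) (b := e.2) (by simpa using he)
  · have : 1 ≤ q1.length := List.length_pos_iff.mpr hq1ne
    have : 1 ≤ q2.length := List.length_pos_iff.mpr hq2ne
    simp only [List.length_append]
    omega

lemma flow_decomp {V : Type*} [Fintype V] [DecidableEq V]
    (Ef : Finset (V × V)) (vplus vminus : V)
    (hacyc : ∀ v : V, ¬ Relation.TransGen (fun a b => (a, b) ∈ Ef) v v)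
    (hsource : ∀ u : V, (u, vplus) ∉ Ef) (hsink : ∀ u : V, (vminus, u) ∉ Ef) :
    ∀ (N : ℕ) (ψ : V × V → ℝ),
      (Finset.univ.filter fun e => 0 < ψ e).card ≤ N →
      (∀ e, 0 ≤ ψ e) → (∀ e ∉ Ef, ψ e = 0) →
      (∀ i : V, i ≠ vplus → i ≠ vminus → ∑ j : V, ψ (j, i) = ∑ j : V, ψ (i, j)) →
      ∃ (n : ℕ) (p : Fin n → List V) (lam : Fin n → ℝ),
        (∀ k, 0 ≤ lam k) ∧ (∀ k, IsPath Ef vplus vminus (p k)) ∧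
        ∀ e, ψ e = ∑ k, lam k * (edgeCount (p k) e : ℝ) := by
  intro N
  induction N with
  | zero =>
    intro ψ hcard hpos hsupp hcons
    have hz : ∀ e, ψ e = 0 := by
      intro e
      by_contra hne
      have : e ∈ Finset.univ.filter fun e => 0 < ψ e := by
        simp [lt_of_le_of_ne (hpos e) (Ne.symm hne)]
      have := Finset.card_pos.mpr ⟨e, this⟩
      omega
    exact ⟨0, fun k => k.elim0, fun k => k.elim0, fun k => k.elim0, fun k => k.elim0,
      fun e => by simp [hz e]⟩
  | succ N ih =>
    intro ψ hcard hpos hsupp hcons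
    rcases Finset.eq_empty_or_nonempty (Finset.univ.filter fun e => 0 < ψ e) with hemp | hne
    · have hz : ∀ e, ψ e = 0 := by
        intro e
        by_contra hne'
        have : e ∈ Finset.univ.filter fun e => 0 < ψ e := by
          simp [lt_of_le_of_ne (hpos e) (Ne.symm hne')]
        simp [hemp] at this
      exact ⟨0, fun k => k.elim0, fun k => k.elim0, fun k => k.elim0, fun k => k.elim0,
        fun e => by simp [hz e]⟩
    · obtain ⟨e0, he0⟩ := hne
      rw [Finset.mem_filter] at he0
      obtain ⟨-, he0pos⟩ := he0
      obtain ⟨u, v⟩ := e0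
      obtain ⟨p, hpIsPath, hppos, hplen⟩ :=
        exists_pos_path Ef vplus vminus hacyc hsource hsink ψ hpos hsupp hcons he0pos
      set T : Finset (V × V) := (p.zip p.tail).toFinset with hT
      have hmemT : ∀ e, e ∈ T ↔ 0 < edgeCount p e := by
        intro e
        rw [hT, List.mem_toFinset, edgeCount, List.count_pos_iff]
      have hTne : T.Nonempty := by
        have hlz : (p.zip p.tail).length = min p.length p.tail.length := List.length_zip ..
        have : p.tail.length = p.length - 1 := List.length_tail
        have hzlen : 0 < (p.zip p.tail).length := by omega
        obtain ⟨e, he⟩ := List.exists_mem_of_length_pos hzlen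
        exact ⟨e, List.mem_toFinset.mpr he⟩
      set δ : ℝ := T.inf' hTne (fun e => ψ e / (edgeCount p e : ℝ)) with hδ
      have hδpos : 0 < δ := by
        rw [hδ, Finset.lt_inf'_iff]
        intro e he
        have hc : 0 < edgeCount p e := (hmemT e).mp he
        exact div_pos (hppos e hc) (by exact_mod_cast hc)
      set ψ' : V × V → ℝ := fun e => ψ e - δ * (edgeCount p e : ℝ) with hψ'
      have hcount0 : ∀ e ∉ T, edgeCount p e = 0 := by
        intro e he
        by_contra hc
        exact he ((hmemT e).mpr (Nat.pos_of_ne_zero hc))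
      have hle : ∀ e, ψ' e ≤ ψ e := fun e =>
        sub_le_self _ (mul_nonneg hδpos.le (Nat.cast_nonneg _))
      have hpos' : ∀ e, 0 ≤ ψ' e := by
        intro e
        by_cases he : e ∈ T
        · have hc : 0 < edgeCount p e := (hmemT e).mp he
          have hcR : (0 : ℝ) < (edgeCount p e : ℝ) := by exact_mod_cast hc
          have hδle : δ ≤ ψ e / (edgeCount p e : ℝ) := Finset.inf'_le _ he
          have := (le_div_iff₀ hcR).mp hδle
          simp only [hψ']
          linarith
        · simp [hψ', hcount0 e he, hpos e]
      have hsupp' : ∀ e ∉ Ef, ψ' e = 0 := by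
        intro e he
        have hc : edgeCount p e = 0 := by
          by_contra hc
          exact he (path_edge_mem hpIsPath (Nat.pos_of_ne_zero hc))
        simp [hψ', hc, hsupp e he]
      have hcons' : ∀ i : V, i ≠ vplus → i ≠ vminus →
          ∑ j : V, ψ' (j, i) = ∑ j : V, ψ' (i, j) := by
        intro i hip him
        have hnat := path_conservation hpIsPath hip him
        have hcast : ∑ j : V, (edgeCount p (j, i) : ℝ) = ∑ j : V, (edgeCount p (i, j) : ℝ) := by
          exact_mod_cast congrArg (Nat.cast : ℕ → ℝ) hnat
        simp only [hψ', Finset.sum_sub_distrib]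
        rw [hcons i hip him, ← Finset.mul_sum, ← Finset.mul_sum, hcast]
      -- strict decrease of support
      obtain ⟨estar, hestarT, hstar⟩ := Finset.exists_mem_eq_inf' hTne
        (fun e => ψ e / (edgeCount p e : ℝ))
      have hcstar : 0 < edgeCount p estar := (hmemT estar).mp hestarT
      have hcstarR : ((edgeCount p estar : ℝ)) ≠ 0 := by positivity
      have hstar0 : ψ' estar = 0 := by
        have hδeq : δ = ψ estar / (edgeCount p estar : ℝ) := hδ.trans hstar
        simp only [hψ']
        rw [hδeq, div_mul_cancel₀ _ hcstarR]
        ring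
      have hssub : (Finset.univ.filter fun e => 0 < ψ' e) ⊂
          (Finset.univ.filter fun e => 0 < ψ e) := by
        constructor
        · intro e he
          rw [Finset.mem_filter] at *
          exact ⟨he.1, lt_of_lt_of_le he.2 (hle e)⟩
        · intro hsub
          have h1 : estar ∈ Finset.univ.filter fun e => 0 < ψ e := by
            simp [hppos estar hcstar]
          have h2 := hsub h1
          rw [Finset.mem_filter, hstar0] at h2
          exact lt_irrefl 0 h2.2
      have hcard' : (Finset.univ.filter fun e => 0 < ψ' e).card ≤ N := by
        have := Finset.card_lt_card hssub
        omega
      obtain ⟨n, pp, lam, hlam, hIsPath', hdecomp⟩ := ih ψ' hcard' hpos' hsupp' hcons'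
      refine ⟨n + 1, Fin.cons p pp, Fin.cons δ lam, ?_, ?_, ?_⟩
      · intro k
        refine Fin.cases ?_ ?_ k
        · simp [hδpos.le]
        · intro j; simp [hlam j]
      · intro k
        refine Fin.cases ?_ ?_ k
        · simpa using hpIsPath
        · intro j; simpa using hIsPath' j
      · intro e
        rw [Fin.sum_univ_succ]
        simp only [Fin.cons_zero, Fin.cons_succ]
        have := hdecomp e
        simp only [hψ'] at this
        linarith

/-- Set of objective values of feasible solutions of the master problem restricted to
the column set `S`:  `{ Σ_l c_l θ_l : Σ_l A_{:l} θ_l ≥ b, θ ≥ 0, supp θ ⊆ S }`. -/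
def mpValues {L : Type*} [Fintype L] {m : ℕ}
    (A : L → Fin m → ℝ) (c : L → ℝ) (b : Fin m → ℝ) (S : Finset L) : Set ℝ :=
  {z | ∃ θ : L → ℝ, (∀ l, 0 ≤ θ l) ∧ (∀ l ∉ S, θ l = 0) ∧
    (∀ i, b i ≤ ∑ l : L, A l i * θ l) ∧ z = ∑ l : L, c l * θ l}

/-- `Ψ(S)`: the optimal value of the master problem restricted to columns `S`. -/
noncomputable def Psi {L : Type*} [Fintype L] {m : ℕ}
    (A : L → Fin m → ℝ) (c : L → ℝ) (b : Fin m → ℝ) (S : Finset L) : ℝ :=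
  sInf (mpValues A c b S)

/-- Set of objective values of feasible solutions of the Graph Generation RMP (8):
columns `θ` on `Ω_R` together with one nonnegative conservative flow `ψ^f` on the
family graph `G^{f_l}` of each generated column `l ∈ Ω_R`. -/
def ggValues {L : Type*} [Fintype L] [DecidableEq L] {m : ℕ}
    {V : Type*} [Fintype V] [DecidableEq V]
    (A : L → Fin m → ℝ) (c : L → ℝ) (b : Fin m → ℝ)
    (E : L → Finset (V × V)) (vplus vminus : V)
    (h : L → V × V → Fin m → ℝ) (ce : L → V × V → ℝ)
    (ΩR : Finset L) : Set ℝ :=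
  {z | ∃ (θ : L → ℝ) (ψ : L → V × V → ℝ),
    (∀ l, 0 ≤ θ l) ∧ (∀ l ∉ ΩR, θ l = 0) ∧
    (∀ f, ∀ e, 0 ≤ ψ f e) ∧ (∀ f ∉ ΩR, ψ f = 0) ∧
    (∀ f ∈ ΩR, ∀ e, e ∉ E f → ψ f e = 0) ∧
    (∀ f ∈ ΩR, ∀ i : V, i ≠ vplus → i ≠ vminus →
      ∑ j : V, ψ f (j, i) = ∑ j : V, ψ f (i, j)) ∧
    (∀ i : Fin m,
      b i ≤ ∑ l : L, A l i * θ l + ∑ f : L, ∑ e : V × V, h f e i * ψ f e) ∧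
    z = ∑ l : L, c l * θ l + ∑ f : L, ∑ e : V × V, ce f e * ψ f e}

/-- The optimal value of the Graph Generation RMP equals `Ψ(Ω_{R2})`, the optimal value
of the master problem over the union of the families of generated columns; in
particular it is at most `Ψ(Ω_R)`. -/
theorem gg_rmp_value_eq_Psi_of_union_of_families
    {L : Type*} [Fintype L] [DecidableEq L] {m : ℕ}
    {V : Type*} [Fintype V] [DecidableEq V]
    (A : L → Fin m → ℝ) (c : L → ℝ) (b : Fin m → ℝ)
    (E : L → Finset (V × V)) (vplus vminus : V)
    (h : L → V × V → Fin m → ℝ) (ce : L → V × V → ℝ)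
    (pathCol : L → List V → L)            -- the surjection p ↦ l_p from paths of G^{f} onto Ω_f
    (fam : L → Finset L)                  -- the family Ω_{f_l} of each column l
    (ΩR : Finset L)
    -- each family contains its generating column
    (hself : ∀ l, l ∈ fam l)
    -- source-to-sink paths of G^{f_l} map into the family Ω_{f_l}
    (hinto : ∀ l₀ ∈ ΩR, ∀ p, IsPath (E l₀) vplus vminus p → pathCol l₀ p ∈ fam l₀)
    -- ... surjectively
    (honto : ∀ l₀ ∈ ΩR, ∀ l ∈ fam l₀,
      ∃ p, IsPath (E l₀) vplus vminus p ∧ pathCol l₀ p = l)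
    -- constraint-column consistency of the edge vectors h^f
    (hA : ∀ l₀ ∈ ΩR, ∀ p, IsPath (E l₀) vplus vminus p → ∀ i : Fin m,
      A (pathCol l₀ p) i = ∑ e : V × V, h l₀ e i * (edgeCount p e : ℝ))
    -- cost consistency of the edge costs c^f
    (hc : ∀ l₀ ∈ ΩR, ∀ p, IsPath (E l₀) vplus vminus p →
      c (pathCol l₀ p) = ∑ e : V × V, ce l₀ e * (edgeCount p e : ℝ))
    -- the graphs are DAGs with source `vplus` and sink `vminus`
    (hacyc : ∀ l₀ ∈ ΩR, ∀ v : V, ¬ Relation.TransGen (fun a b => (a, b) ∈ E l₀) v v)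
    (hsource : ∀ l₀ ∈ ΩR, ∀ u : V, (u, vplus) ∉ E l₀)
    (hsink : ∀ l₀ ∈ ΩR, ∀ u : V, (vminus, u) ∉ E l₀)
    -- the LPs attain their optima and are bounded
    (hattR2 : Psi A c b (ΩR.biUnion fam) ∈ mpValues A c b (ΩR.biUnion fam))
    (hattGG : sInf (ggValues A c b E vplus vminus h ce ΩR) ∈
      ggValues A c b E vplus vminus h ce ΩR)
    (hattR : Psi A c b ΩR ∈ mpValues A c b ΩR)
    (hbddR2 : BddBelow (mpValues A c b (ΩR.biUnion fam)))
    (hbddGG : BddBelow (ggValues A c b E vplus vminus h ce ΩR)) :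
    sInf (ggValues A c b E vplus vminus h ce ΩR) = Psi A c b (ΩR.biUnion fam) ∧
    Psi A c b (ΩR.biUnion fam) ≤ Psi A c b ΩR := by
  set S : Finset L := ΩR.biUnion fam with hS
  have hsub2 : ΩR ⊆ S := fun l hl => Finset.mem_biUnion.mpr ⟨l, hl, hself l⟩
  -- Part 2 : Psi S ≤ Psi ΩR
  have hmpsub : mpValues A c b ΩR ⊆ mpValues A c b S := by
    rintro z ⟨θ, h1, h2, h3, h4⟩
    exact ⟨θ, h1, fun l hl => h2 l fun hlR => hl (hsub2 hlR), h3, h4⟩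
  have hPart2 : Psi A c b S ≤ Psi A c b ΩR :=
    csInf_le_csInf hbddR2 ⟨Psi A c b ΩR, hattR⟩ hmpsub
  -- Part 1a : sInf GG ≤ Psi S
  have h1a : sInf (ggValues A c b E vplus vminus h ce ΩR) ≤ Psi A c b S := by
    obtain ⟨θ, hθpos, hθsupp, hθcon, hθobj⟩ := hattR2
    have hchoice : ∀ x : {l // l ∈ S}, ∃ (f : L) (q : List V),
        f ∈ ΩR ∧ IsPath (E f) vplus vminus q ∧ pathCol f q = x.1 := by
      intro x
      obtain ⟨f, hf, hmem⟩ := Finset.mem_biUnion.mp x.2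
      obtain ⟨q, hq, hpc⟩ := honto f hf x.1 hmem
      exact ⟨f, q, hf, hq, hpc⟩
    choose fch qch hfΩ hfPath hfCol using hchoice
    set ψ0 : L → V × V → ℝ := fun g e =>
      ∑ x ∈ S.attach, (if fch x = g then θ x.1 * (edgeCount (qch x) e : ℝ) else 0) with hψ0
    have key : ∀ w : L → V × V → ℝ,
        ∑ f : L, ∑ e : V × V, w f e * ψ0 f e
          = ∑ x ∈ S.attach, θ x.1 * ∑ e : V × V, w (fch x) e * (edgeCount (qch x) e : ℝ) := by
      intro w
      calc ∑ f : L, ∑ e : V × V, w f e * ψ0 f e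
          = ∑ f : L, ∑ e : V × V, ∑ x ∈ S.attach,
              (if fch x = f then w f e * (θ x.1 * (edgeCount (qch x) e : ℝ)) else 0) := by
            refine Finset.sum_congr rfl fun f _ => Finset.sum_congr rfl fun e _ => ?_
            rw [hψ0, Finset.mul_sum]
            exact Finset.sum_congr rfl fun x _ => by rw [mul_ite, mul_zero]
        _ = ∑ x ∈ S.attach, ∑ f : L, ∑ e : V × V,
              (if fch x = f then w f e * (θ x.1 * (edgeCount (qch x) e : ℝ)) else 0) := by
            exact (Finset.sum_congr rfl fun f _ => Finset.sum_comm).trans Finset.sum_comm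
        _ = ∑ x ∈ S.attach, ∑ e : V × V,
              w (fch x) e * (θ x.1 * (edgeCount (qch x) e : ℝ)) := by
            refine Finset.sum_congr rfl fun x _ => ?_
            rw [Finset.sum_comm]
            refine Finset.sum_congr rfl fun e _ => ?_
            rw [Finset.sum_ite_eq]
            simp
        _ = ∑ x ∈ S.attach, θ x.1 * ∑ e : V × V,
              w (fch x) e * (edgeCount (qch x) e : ℝ) := by
            refine Finset.sum_congr rfl fun x _ => ?_
            rw [Finset.mul_sum]
            exact Finset.sum_congr rfl fun e _ => by ring
    have hAll : ∀ i : Fin m,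
        ∑ f : L, ∑ e : V × V, h f e i * ψ0 f e = ∑ l : L, A l i * θ l := by
      intro i
      rw [key (fun f e => h f e i)]
      calc ∑ x ∈ S.attach, θ x.1 * ∑ e : V × V, h (fch x) e i * (edgeCount (qch x) e : ℝ)
          = ∑ x ∈ S.attach, θ x.1 * A x.1 i := by
            refine Finset.sum_congr rfl fun x _ => ?_
            rw [← hA (fch x) (hfΩ x) (qch x) (hfPath x) i, hfCol x]
        _ = ∑ l ∈ S, θ l * A l i := Finset.sum_attach S (fun l => θ l * A l i)
        _ = ∑ l : L, A l i * θ l := by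
            rw [Finset.sum_subset (Finset.subset_univ S)
              (fun l _ hl => by rw [hθsupp l hl, zero_mul])]
            exact Finset.sum_congr rfl fun l _ => mul_comm _ _
    have hCost : ∑ f : L, ∑ e : V × V, ce f e * ψ0 f e = ∑ l : L, c l * θ l := by
      rw [key ce]
      calc ∑ x ∈ S.attach, θ x.1 * ∑ e : V × V, ce (fch x) e * (edgeCount (qch x) e : ℝ)
          = ∑ x ∈ S.attach, θ x.1 * c x.1 := by
            refine Finset.sum_congr rfl fun x _ => ?_
            rw [← hc (fch x) (hfΩ x) (qch x) (hfPath x), hfCol x]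
        _ = ∑ l ∈ S, θ l * c l := Finset.sum_attach S (fun l => θ l * c l)
        _ = ∑ l : L, c l * θ l := by
            rw [Finset.sum_subset (Finset.subset_univ S)
              (fun l _ hl => by rw [hθsupp l hl, zero_mul])]
            exact Finset.sum_congr rfl fun l _ => mul_comm _ _
    have hmem : Psi A c b S ∈ ggValues A c b E vplus vminus h ce ΩR := by
      refine ⟨fun _ => 0, ψ0, fun l => le_refl 0, fun l _ => rfl, ?_, ?_, ?_, ?_, ?_, ?_⟩
      · intro f e
        refine Finset.sum_nonneg fun x _ => ?_
        split
        · exact mul_nonneg (hθpos x.1) (Nat.cast_nonneg _)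
        · exact le_refl 0
      · intro f hf
        funext e
        refine Finset.sum_eq_zero fun x _ => ?_
        exact if_neg (by rintro rfl; exact hf (hfΩ x))
      · intro f hf e he
        refine Finset.sum_eq_zero fun x _ => ?_
        split
        · next hx =>
          have hz : edgeCount (qch x) e = 0 := by
            by_contra hcnt
            exact he (hx ▸ path_edge_mem (hfPath x) (Nat.pos_of_ne_zero hcnt))
          rw [hz]
          simp
        · rfl
      · intro f hf i hip him
        have hside : ∀ sel : V → V × V,
            ∑ j : V, ψ0 f (sel j)
              = ∑ x ∈ S.attach,
                  (if fch x = f then θ x.1 * ∑ j : V, (edgeCount (qch x) (sel j) : ℝ)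
                   else 0) := by
          intro sel
          rw [hψ0]
          simp only
          rw [Finset.sum_comm]
          refine Finset.sum_congr rfl fun x _ => ?_
          by_cases hx : fch x = f
          · simp [hx, Finset.mul_sum]
          · simp [hx]
        rw [hside (fun j => (j, i)), hside (fun j => (i, j))]
        refine Finset.sum_congr rfl fun x _ => ?_
        by_cases hx : fch x = f
        · have hnat := path_conservation (hfPath x) hip him
          have hcast : (∑ j : V, (edgeCount (qch x) (j, i) : ℝ))
              = ∑ j : V, (edgeCount (qch x) (i, j) : ℝ) := by exact_mod_cast hnat
          simp [hx, hcast]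
        · simp [hx]
      · intro i
        rw [hAll i]
        simpa using hθcon i
      · rw [hCost]
        simpa using hθobj
    exact csInf_le hbddGG hmem
  -- Part 1b : Psi S ≤ sInf GG
  have h1b : Psi A c b S ≤ sInf (ggValues A c b E vplus vminus h ce ΩR) := by
    obtain ⟨θg, ψg, hgθpos, hgθsupp, hgψpos, hgψ0, hgψE, hgψcons, hgcon, hgobj⟩ := hattGG
    have hdec : ∀ x : {f // f ∈ ΩR}, ∃ (n : ℕ) (pp : Fin n → List V) (lam : Fin n → ℝ),
        (∀ k, 0 ≤ lam k) ∧ (∀ k, IsPath (E x.1) vplus vminus (pp k)) ∧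
        ∀ e, ψg x.1 e = ∑ k, lam k * (edgeCount (pp k) e : ℝ) := fun x =>
      flow_decomp (E x.1) vplus vminus (hacyc x.1 x.2) (hsource x.1 x.2) (hsink x.1 x.2)
        _ (ψg x.1) le_rfl (fun e => hgψpos x.1 e) (hgψE x.1 x.2) (hgψcons x.1 x.2)
    choose nn pp lam hlamnn hlamPath hlamdec using hdec
    set θ'' : L → ℝ := fun l => θg l + ∑ x ∈ ΩR.attach, ∑ k : Fin (nn x),
      (if pathCol x.1 (pp x k) = l then lam x k else 0) with hθ''
    have key2 : ∀ (g : L → ℝ) (wv : L → V × V → ℝ),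
        (∀ x : {f // f ∈ ΩR}, ∀ k : Fin (nn x),
          g (pathCol x.1 (pp x k)) = ∑ e : V × V, wv x.1 e * (edgeCount (pp x k) e : ℝ)) →
        ∑ l : L, g l * (∑ x ∈ ΩR.attach, ∑ k : Fin (nn x),
            (if pathCol x.1 (pp x k) = l then lam x k else 0))
          = ∑ f : L, ∑ e : V × V, wv f e * ψg f e := by
      intro g wv hgw
      calc ∑ l : L, g l * (∑ x ∈ ΩR.attach, ∑ k : Fin (nn x),
              (if pathCol x.1 (pp x k) = l then lam x k else 0))
          = ∑ l : L, ∑ x ∈ ΩR.attach, ∑ k : Fin (nn x),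
              (if pathCol x.1 (pp x k) = l then g l * lam x k else 0) := by
            refine Finset.sum_congr rfl fun l _ => ?_
            rw [Finset.mul_sum]
            refine Finset.sum_congr rfl fun x _ => ?_
            rw [Finset.mul_sum]
            exact Finset.sum_congr rfl fun k _ => by rw [mul_ite, mul_zero]
        _ = ∑ x ∈ ΩR.attach, ∑ k : Fin (nn x), ∑ l : L,
              (if pathCol x.1 (pp x k) = l then g l * lam x k else 0) := by
            exact Finset.sum_comm.trans (Finset.sum_congr rfl fun x _ => Finset.sum_comm)
        _ = ∑ x ∈ ΩR.attach, ∑ k : Fin (nn x), g (pathCol x.1 (pp x k)) * lam x k := by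
            refine Finset.sum_congr rfl fun x _ => Finset.sum_congr rfl fun k _ => ?_
            rw [Finset.sum_ite_eq]
            simp
        _ = ∑ x ∈ ΩR.attach, ∑ e : V × V,
              wv x.1 e * ∑ k : Fin (nn x), lam x k * (edgeCount (pp x k) e : ℝ) := by
            refine Finset.sum_congr rfl fun x _ => ?_
            calc ∑ k : Fin (nn x), g (pathCol x.1 (pp x k)) * lam x k
                = ∑ k : Fin (nn x), ∑ e : V × V,
                    wv x.1 e * (edgeCount (pp x k) e : ℝ) * lam x k := by
                  refine Finset.sum_congr rfl fun k _ => ?_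
                  rw [hgw x k, Finset.sum_mul]
              _ = ∑ e : V × V, ∑ k : Fin (nn x),
                    wv x.1 e * (edgeCount (pp x k) e : ℝ) * lam x k := Finset.sum_comm
              _ = ∑ e : V × V,
                    wv x.1 e * ∑ k : Fin (nn x), lam x k * (edgeCount (pp x k) e : ℝ) := by
                  refine Finset.sum_congr rfl fun e _ => ?_
                  rw [Finset.mul_sum]
                  exact Finset.sum_congr rfl fun k _ => by ring
        _ = ∑ x ∈ ΩR.attach, ∑ e : V × V, wv x.1 e * ψg x.1 e := by
            refine Finset.sum_congr rfl fun x _ => Finset.sum_congr rfl fun e _ => ?_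
            rw [hlamdec x e]
        _ = ∑ f ∈ ΩR, ∑ e : V × V, wv f e * ψg f e := Finset.sum_attach ΩR (fun f => ∑ e : V × V, wv f e * ψg f e)
        _ = ∑ f : L, ∑ e : V × V, wv f e * ψg f e := by
            refine Finset.sum_subset (Finset.subset_univ ΩR) fun f _ hf => ?_
            rw [hgψ0 f hf]
            simp
    have hmem2 : sInf (ggValues A c b E vplus vminus h ce ΩR) ∈ mpValues A c b S := by
      refine ⟨θ'', ?_, ?_, ?_, ?_⟩
      · intro l
        refine add_nonneg (hgθpos l) (Finset.sum_nonneg fun x _ =>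
          Finset.sum_nonneg fun k _ => ?_)
        split
        · exact hlamnn x k
        · exact le_refl 0
      · intro l hl
        rw [hθ'']
        simp only
        rw [hgθsupp l fun hlR => hl (hsub2 hlR), zero_add]
        refine Finset.sum_eq_zero fun x _ => Finset.sum_eq_zero fun k _ => ?_
        exact if_neg (by
          rintro rfl
          exact hl (Finset.mem_biUnion.mpr
            ⟨x.1, x.2, hinto x.1 x.2 (pp x k) (hlamPath x k)⟩))
      · intro i
        have hexp : ∑ l : L, A l i * θ'' l
            = ∑ l : L, A l i * θg l + ∑ l : L, A l i * (∑ x ∈ ΩR.attach, ∑ k : Fin (nn x),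
                (if pathCol x.1 (pp x k) = l then lam x k else 0)) := by
          rw [← Finset.sum_add_distrib]
          exact Finset.sum_congr rfl fun l _ => by rw [hθ'']; ring
        rw [hexp, key2 (fun l => A l i) (fun f e => h f e i)
          (fun x k => hA x.1 x.2 (pp x k) (hlamPath x k) i)]
        exact hgcon i
      · have hexp : ∑ l : L, c l * θ'' l
            = ∑ l : L, c l * θg l + ∑ l : L, c l * (∑ x ∈ ΩR.attach, ∑ k : Fin (nn x),
                (if pathCol x.1 (pp x k) = l then lam x k else 0)) := by
          rw [← Finset.sum_add_distrib]
          exact Finset.sum_congr rfl fun l _ => by rw [hθ'']; ring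
        rw [hexp, key2 c ce (fun x k => hc x.1 x.2 (pp x k) (hlamPath x k))]
        exact hgobj
    exact csInf_le hbddR2 hmem2
  exact ⟨le_antisymm h1a h1b, hPart2⟩
end

section
/- For the expanded topological family graph G^f of CVRP, every source-to-sink path corresponds to a feasible CVRP route: the customers visited are distinct, their order respects the family ordering β^f, the total demand does not exceed the vehicle capacity d_0, and the path cost equals the route's travel distance. -/
/-- Edges of the expanded topological family graph `G^f` for CVRP.  Vertices are
customer/remaining-capacity pairs `(u,d)` (as `Sum.inl`), the source `v⁺ = Sum.inr false`
and the sink `v⁻ = Sum.inr true`.  `d` are the demands, `d0` the vehicle capacity and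
`β` the (injective) ordering of the family. -/
def gEdge {N : Type*} (d : N → ℕ) (d0 : ℕ) (β : N → ℕ) :
    ((N × ℕ) ⊕ Bool) → ((N × ℕ) ⊕ Bool) → Prop
  | Sum.inr false, Sum.inl (u, a) => a + d u = d0
  | Sum.inl (u, a), Sum.inl (v, b) => β u < β v ∧ b + d v = a ∧ a + d u ≤ d0
  | Sum.inl (u, a), Sum.inr true => a + d u ≤ d0
  | _, _ => False

/-- Edge costs in `G^f`: `c_{−1,u}` on source edges, `c_{uv}` on internal edges and
`c_{u,−2}` on sink edges. -/
def gCost {N : Type*} (cOut cIn : N → ℝ) (cMid : N → N → ℝ) :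
    ((N × ℕ) ⊕ Bool) → ((N × ℕ) ⊕ Bool) → ℝ
  | Sum.inr _, Sum.inl (u, _) => cOut u
  | Sum.inl (u, _), Sum.inl (v, _) => cMid u v
  | Sum.inl (u, _), Sum.inr _ => cIn u
  | _, _ => 0

/-- Total edge cost along a list of vertices. -/
def pathCost {N : Type*} (cOut cIn : N → ℝ) (cMid : N → N → ℝ)
    (vs : List ((N × ℕ) ⊕ Bool)) : ℝ :=
  ((vs.zip vs.tail).map (fun e => gCost cOut cIn cMid e.1 e.2)).sum

section Helpers

variable {N : Type*} (d : N → ℕ) (d0 : ℕ) (β : N → ℕ)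
variable (cOut cIn : N → ℝ) (cMid : N → N → ℝ)

lemma pathCost_cons (a b : (N × ℕ) ⊕ Bool) (l : List ((N × ℕ) ⊕ Bool)) :
    pathCost cOut cIn cMid (a :: b :: l) =
      gCost cOut cIn cMid a b + pathCost cOut cIn cMid (b :: l) := by
  simp [pathCost]

lemma extract_chain : ∀ (seq : List (N × ℕ)),
    List.Chain' (gEdge d d0 β) (seq.map Sum.inl ++ [Sum.inr true]) →
    List.Chain' (fun p q : N × ℕ => β p.1 < β q.1 ∧ q.2 + d q.1 = p.2) seq
  | [], _ => List.isChain_nil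
  | [p], _ => List.isChain_singleton p
  | p :: q :: rest, h => by
      rw [List.map_cons, List.map_cons, List.cons_append, List.cons_append,
        List.Chain', List.isChain_cons_cons] at h
      obtain ⟨he, h2⟩ := h
      refine List.isChain_cons_cons.2 ⟨⟨he.1, he.2.1⟩, ?_⟩
      exact extract_chain (q :: rest) (by simpa [List.Chain'] using h2)

lemma dem_bound : ∀ (p : N × ℕ) (seq : List (N × ℕ)),
    List.Chain' (fun p q : N × ℕ => q.2 + d q.1 = p.2) (p :: seq) →
    (((p :: seq).map Prod.fst).map d).sum ≤ p.2 + d p.1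
  | p, [], _ => by simp
  | p, q :: rest, h => by
      rw [List.Chain', List.isChain_cons_cons] at h
      have ih := dem_bound q rest h.2
      simp only [List.map_cons, List.sum_cons] at *
      omega

lemma cost_tail : ∀ (seq : List (N × ℕ)) (hne : seq ≠ []),
    pathCost cOut cIn cMid (seq.map Sum.inl ++ [Sum.inr true]) =
      ((seq.zip seq.tail).map (fun e => cMid e.1.1 e.2.1)).sum
        + cIn (seq.getLast hne).1
  | [p], _ => by simp [pathCost, gCost]
  | p :: q :: rest, _ => by
      rw [List.map_cons, List.cons_append, List.map_cons, List.cons_append,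
        pathCost_cons]
      have ih := cost_tail (q :: rest) (by simp)
      rw [List.map_cons, List.cons_append] at ih
      rw [ih]
      simp [gCost]
      ring

end Helpers

/-- Every source-to-sink path in the expanded topological family graph `G^f`
corresponds to a feasible CVRP route: its customers are distinct, visited in an order
consistent with `β^f`, their total demand is at most the capacity `d0`, and the path
cost equals the travel distance of the route. -/
theorem gg_family_path_is_feasible_route
    {N : Type*} [DecidableEq N]
    (d : N → ℕ) (d0 : ℕ) (β : N → ℕ) (hβ : Function.Injective β)
    (cOut cIn : N → ℝ) (cMid : N → N → ℝ)
    (seq : List (N × ℕ)) (hne : seq ≠ [])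
    (hpath : (Sum.inr false :: (seq.map Sum.inl ++ [Sum.inr true]) :
        List ((N × ℕ) ⊕ Bool)).Chain' (gEdge d d0 β)) :
    (seq.map Prod.fst).Nodup ∧
    (seq.map Prod.fst).Pairwise (fun u v => β u < β v) ∧
    ((seq.map Prod.fst).map d).sum ≤ d0 ∧
    (pathCost cOut cIn cMid
        (Sum.inr false :: (seq.map Sum.inl ++ [Sum.inr true])))
      = cOut (seq.head hne).1
        + ((seq.zip seq.tail).map (fun e => cMid e.1.1 e.2.1)).sum
        + cIn (seq.getLast hne).1 := by
  obtain ⟨p, rest, rfl⟩ : ∃ p rest, seq = p :: rest := by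
    cases seq with
    | nil => exact absurd rfl hne
    | cons a l => exact ⟨a, l, rfl⟩
  rw [List.map_cons, List.cons_append, List.Chain', List.isChain_cons_cons] at hpath
  obtain ⟨hsrc, hrest⟩ := hpath
  have hsrc' : p.2 + d p.1 = d0 := by
    obtain ⟨u, a⟩ := p; exact hsrc
  have hchain := extract_chain d d0 β (p :: rest)
    (by rw [List.map_cons, List.cons_append]; exact hrest)
  have hpw : ((p :: rest).map Prod.fst).Pairwise (fun u v => β u < β v) := by
    have hc : ((p :: rest).map Prod.fst).Chain' (fun u v => β u < β v) := by
      rw [List.Chain', List.isChain_map]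
      exact hchain.imp (fun a b h => h.1)
    haveI : IsTrans N (fun u v => β u < β v) := ⟨fun _ _ _ h1 h2 => h1.trans h2⟩
    exact hc.pairwise
  refine ⟨?_, hpw, ?_, ?_⟩
  · exact hpw.imp (fun {a b} (h : β a < β b) hab =>
      (Nat.ne_of_lt h) (congrArg β hab))
  · have := dem_bound d p rest (hchain.imp (fun a b h => h.2))
    omega
  · rw [List.map_cons, List.cons_append, pathCost_cons]
    have hg : gCost cOut cIn cMid (Sum.inr false) (Sum.inl p) = cOut p.1 := by
      obtain ⟨u, a⟩ := p; rfl
    have hct := cost_tail cOut cIn cMid (p :: rest) (by simp)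
    rw [List.map_cons, List.cons_append] at hct
    rw [hct, hg]
    simp
    ring
end

section
/- If each family Ω_{f_l} contains its generating column l, then at every iteration of Graph Generation Ψ(Ω_{R2}) ≤ Ψ(Ω_R), and Graph Generation terminates with the exact optimum of the master problem: when pricing finds no negative reduced cost column at the GG dual solution, the GG RMP optimal value equals the MP optimal value. -/
lemma mpValues_mono {L : Type*} [Fintype L] {m : ℕ}
    (A : L → Fin m → ℝ) (c : L → ℝ) (b : Fin m → ℝ) {S T : Finset L} (h : S ⊆ T) :
    mpValues A c b S ⊆ mpValues A c b T := by
  rintro z ⟨θ, h1, h2, h3, h4⟩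
  exact ⟨θ, h1, fun l hl => h2 l (fun hls => hl (h hls)), h3, h4⟩

/-- If each family `Ω_{f_l}` contains its generating column `l`, then at every iteration
of Graph Generation `Ψ(Ω_{R2}) ≤ Ψ(Ω_R)` for `Ω_{R2} = ∪_{l∈Ω_R} Ω_{f_l}`; and upon
termination — when exact pricing finds no negative reduced cost column at the GG dual
solution `π` — the GG RMP optimal value `Ψ(Ω_{R2})` equals the master problem optimum
`Ψ(Ω)`. -/
theorem gg_monotone_and_terminates_with_mp_optimum
    {L : Type*} [Fintype L] [DecidableEq L] {m : ℕ}
    (A : L → Fin m → ℝ) (c : L → ℝ) (b : Fin m → ℝ)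
    (fam : L → Finset L) (hself : ∀ l, l ∈ fam l)
    (ΩR : Finset L)
    (hneR : (mpValues A c b ΩR).Nonempty)
    (hbdd2 : BddBelow (mpValues A c b (ΩR.biUnion fam)))
    -- π is the GG dual solution: dual optimal for the RMP over Ω_{R2}, with
    -- primal optimal solution θ* (strong duality)
    (π : Fin m → ℝ) (θstar : L → ℝ)
    (hπ : ∀ i, 0 ≤ π i)
    (hθnonneg : ∀ l, 0 ≤ θstar l)
    (hθsupp : ∀ l ∉ ΩR.biUnion fam, θstar l = 0)
    (hθfeas : ∀ i, b i ≤ ∑ l : L, A l i * θstar l)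
    (hstrong : ∑ i, π i * b i = ∑ l : L, c l * θstar l)
    -- exact pricing finds no negative reduced cost column
    (hpricing : ∀ l : L, 0 ≤ c l - ∑ i, π i * A l i) :
    Psi A c b (ΩR.biUnion fam) ≤ Psi A c b ΩR ∧
    Psi A c b (ΩR.biUnion fam) = Psi A c b Finset.univ := by
  have hsub : ΩR ⊆ ΩR.biUnion fam := fun l hl =>
    Finset.mem_biUnion.mpr ⟨l, hl, hself l⟩
  have hsetsub := mpValues_mono A c b hsub
  have hsetsub2 := mpValues_mono A c b (Finset.subset_univ (ΩR.biUnion fam))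
  -- weak duality: every feasible value over univ is ≥ ∑ π b
  have hweak : ∀ z ∈ mpValues A c b Finset.univ, ∑ i, π i * b i ≤ z := by
    rintro z ⟨θ, h1, _, h3, rfl⟩
    calc ∑ i, π i * b i ≤ ∑ i, π i * ∑ l : L, A l i * θ l := by
          apply Finset.sum_le_sum
          intro i _
          exact mul_le_mul_of_nonneg_left (h3 i) (hπ i)
      _ = ∑ l : L, (∑ i, π i * A l i) * θ l := by
          simp_rw [Finset.mul_sum, Finset.sum_mul, ← mul_assoc]
          exact Finset.sum_comm
      _ ≤ ∑ l : L, c l * θ l := by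
          apply Finset.sum_le_sum
          intro l _
          exact mul_le_mul_of_nonneg_right (by linarith [hpricing l]) (h1 l)
  have hθmem : (∑ l : L, c l * θstar l) ∈ mpValues A c b (ΩR.biUnion fam) :=
    ⟨θstar, hθnonneg, hθsupp, hθfeas, rfl⟩
  have hne2 : (mpValues A c b (ΩR.biUnion fam)).Nonempty := ⟨_, hθmem⟩
  have hneU : (mpValues A c b Finset.univ).Nonempty := hne2.mono hsetsub2
  constructor
  · exact csInf_le_csInf hbdd2 hneR hsetsub
  · apply le_antisymm
    · -- Psi Ω₂ ≤ θstar value = πb ≤ Psi univ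
      calc Psi A c b (ΩR.biUnion fam) ≤ ∑ l : L, c l * θstar l := csInf_le hbdd2 hθmem
        _ = ∑ i, π i * b i := hstrong.symm
        _ ≤ Psi A c b Finset.univ := le_csInf hneU hweak
    · exact csInf_le_csInf ⟨_, hweak⟩ hne2 hsetsub2
end
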